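/- arXiv:1404.2693 — 12 statements merged into one kernel-verified Lean document; each statement's English description precedes it below -/
import Mathlib

section
/- For every nonnegative integer n, the number of integer solutions (x,y,z) to x² + y² + z² + yz + xz + xy = 2n equals the number of integer solutions to x² + y² + z² = n. -/
theorem stmt0 (n : ℕ) :
    Nat.card {p : ℤ × ℤ × ℤ // p.1^2 + p.2.1^2 + p.2.2^2 + p.2.1*p.2.2 + p.1*p.2.2 + p.1*p.2.1 = (2*n : ℤ)} = Nat.card {p : ℤ × ℤ × ℤ // p.1^2 + p.2.1^2 + p.2.2^2 = (n : ℤ)} := by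
  symm
  apply Nat.card_congr
  apply Equiv.ofBijective
    (fun q : {p : ℤ × ℤ × ℤ // p.1^2 + p.2.1^2 + p.2.2^2 = (n : ℤ)} =>
      (⟨(q.1.1 - q.1.2.1 + q.1.2.2, q.1.1 + q.1.2.1 - q.1.2.2, -q.1.1 + q.1.2.1 + q.1.2.2),
        by
          obtain ⟨⟨u, v, w⟩, hq⟩ := q
          simp only at hq ⊢
          linear_combination 2 * hq⟩ :
        {p : ℤ × ℤ × ℤ // p.1^2 + p.2.1^2 + p.2.2^2 + p.2.1*p.2.2 + p.1*p.2.2 + p.1*p.2.1 = (2*n : ℤ)}))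
  constructor
  · rintro ⟨⟨a, b, c⟩, ha⟩ ⟨⟨d, e, f⟩, hd⟩ h
    simp only [Subtype.mk.injEq, Prod.mk.injEq] at h ⊢
    omega
  · rintro ⟨⟨x, y, z⟩, h⟩
    simp only at h
    -- parity: x ≡ y ≡ z (mod 2)
    have hxy : (2:ℤ) ∣ x + y := by
      have h2 : (x:ZMod 2) + (y:ZMod 2) + (z:ZMod 2) + y*z + x*z + x*y = 0 := by
        have := congrArg (fun t : ℤ => (t : ZMod 2)) h
        push_cast at this
        simpa [show (2:ZMod 2) = 0 from rfl] using this
      have : ((x + y : ℤ) : ZMod 2) = 0 := by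
        push_cast
        revert h2
        generalize (x : ZMod 2) = a; generalize (y : ZMod 2) = b; generalize (z : ZMod 2) = c
        revert a b c; decide
      exact (ZMod.intCast_zmod_eq_zero_iff_dvd _ 2).mp this
    have hyz : (2:ℤ) ∣ y + z := by
      have h2 : (x:ZMod 2) + (y:ZMod 2) + (z:ZMod 2) + y*z + x*z + x*y = 0 := by
        have := congrArg (fun t : ℤ => (t : ZMod 2)) h
        push_cast at this
        simpa [show (2:ZMod 2) = 0 from rfl] using this
      have : ((y + z : ℤ) : ZMod 2) = 0 := by
        push_cast
        revert h2
        generalize (x : ZMod 2) = a; generalize (y : ZMod 2) = b; generalize (z : ZMod 2) = c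
        revert a b c; decide
      exact (ZMod.intCast_zmod_eq_zero_iff_dvd _ 2).mp this
    have hxz : (2:ℤ) ∣ x + z := by omega
    obtain ⟨u, hu⟩ := hxy
    obtain ⟨v, hv⟩ := hyz
    obtain ⟨w, hw⟩ := hxz
    have hx : x = u - v + w := by omega
    have hy : y = u + v - w := by omega
    have hz : z = -u + v + w := by omega
    refine ⟨⟨(u, v, w), ?_⟩, ?_⟩
    · simp only
      have : (u - v + w)^2 + (u + v - w)^2 + (-u + v + w)^2 + (u+v-w)*(-u+v+w) + (u-v+w)*(-u+v+w) + (u-v+w)*(u+v-w) = 2 * n := by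
        rw [← hx, ← hy, ← hz]; exact h
      linarith [this, sq_nonneg u]
    · simp only [Subtype.mk.injEq, Prod.mk.injEq]
      omega
end

section
/- For every nonnegative integer n, the number of integer solutions (x,y,z) to x² + y² + z² + yz + xz + xy = 2n+1 equals the number of integer solutions to x² + y² + z² = 4n+2. -/
lemma even_sum_of_even_sq {a b c : ℤ} (h : Even (a^2+b^2+c^2)) : Even (a+b+c) := by
  simpa [Int.even_add, Int.even_pow] using h

theorem stmt1 (n : ℕ) :
    Nat.card {p : ℤ × ℤ × ℤ // p.1^2 + p.2.1^2 + p.2.2^2 + p.2.1*p.2.2 + p.1*p.2.2 + p.1*p.2.1 = (2*n+1 : ℤ)} = Nat.card {p : ℤ × ℤ × ℤ // p.1^2 + p.2.1^2 + p.2.2^2 = (4*n+2 : ℤ)} := by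
  apply Nat.card_congr
  refine ⟨fun p => ⟨(p.1.1 + p.1.2.1, p.1.2.1 + p.1.2.2, p.1.1 + p.1.2.2), ?_⟩,
          fun q => ⟨((q.1.1 - q.1.2.1 + q.1.2.2)/2, (q.1.1 + q.1.2.1 - q.1.2.2)/2,
                     (-q.1.1 + q.1.2.1 + q.1.2.2)/2), ?_⟩, ?_, ?_⟩
  · obtain ⟨⟨x, y, z⟩, h⟩ := p
    simp only at h ⊢
    linear_combination 2 * h
  · obtain ⟨⟨a, b, c⟩, h⟩ := q
    simp only at h ⊢
    have hs : Even (a + b + c) := even_sum_of_even_sq (by rw [h]; exact ⟨2*n+1, by ring⟩)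
    obtain ⟨k, hk⟩ := hs
    have hx : (a - b + c)/2 = k - b := by omega
    have hy : (a + b - c)/2 = k - c := by omega
    have hz : (-a + b + c)/2 = k - a := by omega
    rw [hx, hy, hz]
    have h2 : 2 * ((k-b)^2 + (k-c)^2 + (k-a)^2 + (k-c)*(k-a) + (k-b)*(k-a) + (k-b)*(k-c))
        = 2 * (2*(n:ℤ)+1) := by linear_combination h + (a+b+c-6*k) * hk
    linarith [h2]
  · rintro ⟨⟨x, y, z⟩, h⟩
    apply Subtype.ext
    simp only
    refine Prod.ext ?_ (Prod.ext ?_ ?_) <;> simp only <;> omega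
  · rintro ⟨⟨a, b, c⟩, h⟩
    have hs : Even (a + b + c) := even_sum_of_even_sq (by rw [h]; exact ⟨2*n+1, by ring⟩)
    obtain ⟨k, hk⟩ := hs
    apply Subtype.ext
    simp only
    refine Prod.ext ?_ (Prod.ext ?_ ?_) <;> simp only <;> omega
end

section
/- For every nonnegative integer n, the number of integer solutions (x,y,z) to 3x² + 3y² + 3z² − 2yz + 2xz + 2xy = 4n equals the number of integer solutions to x² + y² + z² = n. -/
lemma aux_even {x y z : ℤ} {n : ℕ}
    (h : 3*x^2 + 3*y^2 + 3*z^2 - 2*y*z + 2*x*z + 2*x*y = (4*n : ℤ)) :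
    (2 : ℤ) ∣ x + y + z := by
  rcases Int.even_or_odd (x + y + z) with he | ho
  · exact he.two_dvd
  · exfalso
    obtain ⟨k, hk⟩ := ho
    have hx : x = 2*k + 1 - y - z := by omega
    subst hx
    have h2 : (4*(n:ℤ)) = 4*(3*k^2 + 3*k - 2*k*z - z + z^2 - 2*k*y - y + y^2) + 3 := by
      linear_combination -h
    omega

theorem stmt3 (n : ℕ) :
    Nat.card {p : ℤ × ℤ × ℤ // 3*p.1^2 + 3*p.2.1^2 + 3*p.2.2^2 - 2*p.2.1*p.2.2 + 2*p.1*p.2.2 + 2*p.1*p.2.1 = (4*n : ℤ)} = Nat.card {p : ℤ × ℤ × ℤ // p.1^2 + p.2.1^2 + p.2.2^2 = (n : ℤ)} := by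
  refine Nat.card_congr ⟨fun p => ⟨((p.1.1 + p.1.2.1 + p.1.2.2)/2,
      (p.1.1 + p.1.2.1 + p.1.2.2)/2 - p.1.2.2, (p.1.1 + p.1.2.1 + p.1.2.2)/2 - p.1.2.1), ?_⟩,
    fun q => ⟨(q.1.2.1 + q.1.2.2, q.1.1 - q.1.2.2, q.1.1 - q.1.2.1), ?_⟩, ?_, ?_⟩
  · obtain ⟨⟨x, y, z⟩, hp⟩ := p
    dsimp only at hp ⊢
    obtain ⟨u, hu⟩ := aux_even hp
    have h2 : (x + y + z)/2 = u := by omega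
    rw [h2]
    have hx : x = 2*u - y - z := by omega
    subst hx
    have h4 : 4*(u^2 + (u - z)^2 + (u - y)^2) = 4*(n:ℤ) := by linear_combination hp
    linarith
  · obtain ⟨⟨u, v, w⟩, hq⟩ := q
    simp only at hq ⊢
    linear_combination 4*hq
  · rintro ⟨⟨x, y, z⟩, hp⟩
    dsimp only at hp
    have hd := aux_even hp
    apply Subtype.ext
    dsimp only
    simp only [Prod.mk.injEq]
    refine ⟨?_, ?_, ?_⟩ <;> omega
  · rintro ⟨⟨u, v, w⟩, hq⟩
    apply Subtype.ext
    simp only [Prod.mk.injEq]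
    refine ⟨?_, ?_, ?_⟩ <;> omega
end

section
/- For every nonnegative integer n, the number of integer solutions (x,y,z) to 3x² + 3y² + 3z² − 2yz + 2xz + 2xy = 8n+3 equals the number of integer solutions to x² + y² + z² = 8n+3. -/
private lemma parity_lemma (X Y Z : ℤ) (m : ℤ) (h : X^2 + Y^2 + Z^2 = 8*m+3) :
    X % 2 = 1 ∧ Y % 2 = 1 ∧ Z % 2 = 1 := by
  have h4 : (X : ZMod 4)^2 + (Y : ZMod 4)^2 + (Z : ZMod 4)^2 = 3 := by
    calc (X : ZMod 4)^2 + (Y : ZMod 4)^2 + (Z : ZMod 4)^2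
        = ((X^2+Y^2+Z^2 : ℤ) : ZMod 4) := by push_cast; ring
      _ = ((8*m+3 : ℤ) : ZMod 4) := by rw [h]
      _ = 4 * (2 * (m : ZMod 4)) + 3 := by push_cast; ring
      _ = 3 := by rw [show (4 : ZMod 4) = 0 from rfl]; ring
  have key : ∀ a b c : ZMod 4, a^2+b^2+c^2 = 3 →
      (a = 1 ∨ a = 3) ∧ (b = 1 ∨ b = 3) ∧ (c = 1 ∨ c = 3) := by decide
  have conv : ∀ t : ℤ, ((t : ZMod 4) = 1 ∨ (t : ZMod 4) = 3) → t % 2 = 1 := by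
    intro t ht
    rcases ht with h1 | h1
    · have h2 := (ZMod.intCast_eq_intCast_iff t 1 4).mp (by exact_mod_cast h1)
      simp [Int.ModEq] at h2
      omega
    · have h2 := (ZMod.intCast_eq_intCast_iff t 3 4).mp (by exact_mod_cast h1)
      simp [Int.ModEq] at h2
      omega
  obtain ⟨ha, hb, hc⟩ := key _ _ _ h4
  exact ⟨conv X ha, conv Y hb, conv Z hc⟩

theorem stmt4 (n : ℕ) :
    Nat.card {p : ℤ × ℤ × ℤ // 3*p.1^2 + 3*p.2.1^2 + 3*p.2.2^2 - 2*p.2.1*p.2.2 + 2*p.1*p.2.2 + 2*p.1*p.2.1 = (8*n+3 : ℤ)} = Nat.card {p : ℤ × ℤ × ℤ // p.1^2 + p.2.1^2 + p.2.2^2 = (8*n+3 : ℤ)} := by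
  apply Nat.card_congr
  refine
    { toFun := fun p => ⟨(p.1.1 + p.1.2.1 + p.1.2.2, p.1.1 + p.1.2.1 - p.1.2.2,
        p.1.1 - p.1.2.1 + p.1.2.2), ?_⟩
      invFun := fun q => ⟨((q.1.2.1 + q.1.2.2)/2, (q.1.1 - q.1.2.2)/2, (q.1.1 - q.1.2.1)/2), ?_⟩
      left_inv := ?_
      right_inv := ?_ }
  · obtain ⟨⟨x, y, z⟩, h⟩ := p
    simp only at h ⊢
    linear_combination h
  · obtain ⟨⟨X, Y, Z⟩, h⟩ := q
    simp only at h ⊢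
    obtain ⟨hx, hy, hz⟩ := parity_lemma X Y Z n h
    obtain ⟨a, ha⟩ : ∃ a, (Y+Z)/2 = a := ⟨_, rfl⟩
    obtain ⟨b, hb⟩ : ∃ b, (X-Z)/2 = b := ⟨_, rfl⟩
    obtain ⟨c, hc⟩ : ∃ c, (X-Y)/2 = c := ⟨_, rfl⟩
    rw [ha, hb, hc]
    have hX : X = a + b + c := by omega
    have hY : Y = a + b - c := by omega
    have hZ : Z = a - b + c := by omega
    linear_combination h - (X+(a+b+c))*hX - (Y+(a+b-c))*hY - (Z+(a-b+c))*hZ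
  · rintro ⟨⟨x, y, z⟩, h⟩
    apply Subtype.ext
    simp only [Prod.mk.injEq]
    refine ⟨by omega, by omega, by omega⟩
  · rintro ⟨⟨X, Y, Z⟩, h⟩
    apply Subtype.ext
    simp only [Prod.mk.injEq]
    obtain ⟨hx, hy, hz⟩ := parity_lemma X Y Z n h
    refine ⟨by omega, by omega, by omega⟩
end

section
/- For every nonnegative integer n, the number of integer solutions (x,y,z) to x² + y² + 2z² = 2n equals the number of integer solutions to x² + y² + z² = n. -/
lemma par_aux (x y z n : ℤ) (h : x^2+y^2+2*z^2 = 2*n) :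
    ∃ a b : ℤ, x + y = 2*a ∧ x - y = 2*b := by
  have he : Even (x^2 + y^2) := ⟨n - z^2, by linarith⟩
  have hxy : Even x ↔ Even y := by
    have := Int.even_add.mp he
    simpa [Int.even_pow] using this
  have : Even (x + y) := Int.even_add.mpr hxy
  obtain ⟨a, ha⟩ := this
  exact ⟨a, a - y, by omega, by omega⟩

theorem stmt7 (n : ℕ) :
    Nat.card {p : ℤ × ℤ × ℤ // p.1^2 + p.2.1^2 + 2*p.2.2^2 = (2*n : ℤ)} = Nat.card {p : ℤ × ℤ × ℤ // p.1^2 + p.2.1^2 + p.2.2^2 = (n : ℤ)} := by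
  apply Nat.card_congr
  refine ⟨fun p => ⟨((p.1.1 + p.1.2.1)/2, (p.1.1 - p.1.2.1)/2, p.1.2.2), ?_⟩,
    fun q => ⟨(q.1.1 + q.1.2.1, q.1.1 - q.1.2.1, q.1.2.2), ?_⟩, ?_, ?_⟩
  · obtain ⟨⟨x, y, z⟩, hp⟩ := p
    obtain ⟨a, b, ha, hb⟩ := par_aux x y z n hp
    simp only at hp ⊢
    rw [ha, hb, Int.mul_ediv_cancel_left _ (by norm_num), Int.mul_ediv_cancel_left _ (by norm_num)]
    have hx : x = a + b := by omega
    have hy : y = a - b := by omega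
    subst hx hy
    nlinarith [hp]
  · obtain ⟨⟨x, y, z⟩, hq⟩ := q
    simp only at hq ⊢
    ring_nf
    ring_nf at hq
    nlinarith [hq]
  · rintro ⟨⟨x, y, z⟩, hp⟩
    obtain ⟨a, b, ha, hb⟩ := par_aux x y z n hp
    ext <;> simp <;> omega
  · rintro ⟨⟨x, y, z⟩, hq⟩
    ext <;> simp <;> omega
end

section
/- For every nonnegative integer n, three times the number of integer solutions (x,y,z) to x² + y² + 2z² = 2n+1 equals the number of integer solutions to x² + y² + z² = 4n+2. -/
private lemma oddsum8 {n : ℕ} {a b c : ℤ} (h : a^2 + b^2 + 2*c^2 = (2*n+1 : ℤ)) :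
    Odd (a + b) ∧ Odd (a - b) := by
  rcases Int.even_or_odd a with ⟨u, rfl⟩ | ⟨u, rfl⟩ <;>
  rcases Int.even_or_odd b with ⟨v, rfl⟩ | ⟨v, rfl⟩
  · exfalso
    have h2 : (2:ℤ) ∣ 2*n+1 := ⟨2*u^2+2*v^2+c^2, by linear_combination -h⟩
    omega
  · exact ⟨⟨u+v, by ring⟩, ⟨u-v-1, by ring⟩⟩
  · exact ⟨⟨u+v, by ring⟩, ⟨u-v, by ring⟩⟩
  · exfalso
    have h2 : (2:ℤ) ∣ 2*n-1 := ⟨2*u^2+2*u+2*v^2+2*v+c^2, by linear_combination -h⟩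
    omega

private def g8 (n : ℕ) :
    ({p : ℤ × ℤ × ℤ // p.1^2 + p.2.1^2 + 2*p.2.2^2 = (2*n+1 : ℤ)} ⊕
     {p : ℤ × ℤ × ℤ // p.1^2 + p.2.1^2 + 2*p.2.2^2 = (2*n+1 : ℤ)} ⊕
     {p : ℤ × ℤ × ℤ // p.1^2 + p.2.1^2 + 2*p.2.2^2 = (2*n+1 : ℤ)}) →
    {p : ℤ × ℤ × ℤ // p.1^2 + p.2.1^2 + p.2.2^2 = (4*n+2 : ℤ)}
  | .inl ⟨(a,b,c), h⟩ => ⟨(a+b, a-b, 2*c), by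
      show (a+b)^2 + (a-b)^2 + (2*c)^2 = (4*n+2 : ℤ)
      have h' : a^2 + b^2 + 2*c^2 = (2*n+1 : ℤ) := h
      linear_combination 2*h'⟩
  | .inr (.inl ⟨(a,b,c), h⟩) => ⟨(2*c, a+b, a-b), by
      show (2*c)^2 + (a+b)^2 + (a-b)^2 = (4*n+2 : ℤ)
      have h' : a^2 + b^2 + 2*c^2 = (2*n+1 : ℤ) := h
      linear_combination 2*h'⟩
  | .inr (.inr ⟨(a,b,c), h⟩) => ⟨(a+b, 2*c, a-b), by
      show (a+b)^2 + (2*c)^2 + (a-b)^2 = (4*n+2 : ℤ)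
      have h' : a^2 + b^2 + 2*c^2 = (2*n+1 : ℤ) := h
      linear_combination 2*h'⟩

private lemma g8_inj (n : ℕ) : Function.Injective (g8 n) := by
  rintro (⟨⟨a,b,c⟩,h⟩ | ⟨⟨a,b,c⟩,h⟩ | ⟨⟨a,b,c⟩,h⟩)
    (⟨⟨a',b',c'⟩,h'⟩ | ⟨⟨a',b',c'⟩,h'⟩ | ⟨⟨a',b',c'⟩,h'⟩) hst <;>
  simp only [g8, Subtype.mk.injEq, Prod.mk.injEq, Sum.inl.injEq, Sum.inr.injEq] at hst ⊢
  · omega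
  · exfalso
    obtain ⟨k, hk⟩ := (oddsum8 (show a'^2 + b'^2 + 2*c'^2 = (2*n+1:ℤ) from h')).2
    omega
  · exfalso
    obtain ⟨k, hk⟩ := (oddsum8 (show a'^2 + b'^2 + 2*c'^2 = (2*n+1:ℤ) from h')).2
    omega
  · exfalso
    obtain ⟨k, hk⟩ := (oddsum8 (show a^2 + b^2 + 2*c^2 = (2*n+1:ℤ) from h)).2
    omega
  · omega
  · exfalso
    obtain ⟨k, hk⟩ := (oddsum8 (show a'^2 + b'^2 + 2*c'^2 = (2*n+1:ℤ) from h')).1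
    omega
  · exfalso
    obtain ⟨k, hk⟩ := (oddsum8 (show a^2 + b^2 + 2*c^2 = (2*n+1:ℤ) from h)).2
    omega
  · exfalso
    obtain ⟨k, hk⟩ := (oddsum8 (show a^2 + b^2 + 2*c^2 = (2*n+1:ℤ) from h)).1
    omega
  · omega

private lemma g8_surj (n : ℕ) : Function.Surjective (g8 n) := by
  rintro ⟨⟨x,y,z⟩,h⟩
  have h' : x^2 + y^2 + z^2 = (4*n+2 : ℤ) := h
  rcases Int.even_or_odd x with ⟨u, rfl⟩ | ⟨u, rfl⟩ <;>
  rcases Int.even_or_odd y with ⟨v, rfl⟩ | ⟨v, rfl⟩ <;>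
  rcases Int.even_or_odd z with ⟨w, rfl⟩ | ⟨w, rfl⟩
  · exfalso
    have h2 : (4:ℤ) ∣ 4*n+2 := ⟨u^2+v^2+w^2, by linear_combination -h'⟩
    omega
  · exfalso
    have h2 : (4:ℤ) ∣ 4*n+1 := ⟨u^2+v^2+w^2+w, by linear_combination -h'⟩
    omega
  · exfalso
    have h2 : (4:ℤ) ∣ 4*n+1 := ⟨u^2+v^2+v+w^2, by linear_combination -h'⟩
    omega
  · -- x even, y odd, z odd : branch 2, a+b = y, a-b = z, 2c = x
    refine ⟨.inr (.inl ⟨(v+w+1, v-w, u), ?_⟩), ?_⟩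
    · show (v+w+1)^2 + (v-w)^2 + 2*u^2 = (2*n+1 : ℤ)
      have := mul_left_cancel₀ (two_ne_zero)
        (show (2:ℤ)*((v+w+1)^2 + (v-w)^2 + 2*u^2) = 2*(2*↑n+1) by linear_combination h')
      exact this
    · apply Subtype.ext
      show ((2*u : ℤ), ((v+w+1)+(v-w) : ℤ), ((v+w+1)-(v-w) : ℤ)) = (u+u, 2*v+1, 2*w+1)
      refine Prod.ext ?_ (Prod.ext ?_ ?_) <;> simp <;> ring
  · exfalso
    have h2 : (4:ℤ) ∣ 4*n+1 := ⟨u^2+u+v^2+w^2, by linear_combination -h'⟩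
    omega
  · -- x odd, y even, z odd : branch 3
    refine ⟨.inr (.inr ⟨(u+w+1, u-w, v), ?_⟩), ?_⟩
    · show (u+w+1)^2 + (u-w)^2 + 2*v^2 = (2*n+1 : ℤ)
      exact mul_left_cancel₀ (two_ne_zero)
        (show (2:ℤ)*((u+w+1)^2 + (u-w)^2 + 2*v^2) = 2*(2*↑n+1) by linear_combination h')
    · apply Subtype.ext
      show (((u+w+1)+(u-w) : ℤ), (2*v : ℤ), ((u+w+1)-(u-w) : ℤ)) = (2*u+1, v+v, 2*w+1)
      refine Prod.ext ?_ (Prod.ext ?_ ?_) <;> simp <;> ring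
  · -- x odd, y odd, z even : branch 1
    refine ⟨.inl ⟨(u+v+1, u-v, w), ?_⟩, ?_⟩
    · show (u+v+1)^2 + (u-v)^2 + 2*w^2 = (2*n+1 : ℤ)
      exact mul_left_cancel₀ (two_ne_zero)
        (show (2:ℤ)*((u+v+1)^2 + (u-v)^2 + 2*w^2) = 2*(2*↑n+1) by linear_combination h')
    · apply Subtype.ext
      show (((u+v+1)+(u-v) : ℤ), ((u+v+1)-(u-v) : ℤ), (2*w : ℤ)) = (2*u+1, 2*v+1, w+w)
      refine Prod.ext ?_ (Prod.ext ?_ ?_) <;> simp <;> ring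
  · exfalso
    have h2 : (4:ℤ) ∣ 4*n-1 := ⟨u^2+u+v^2+v+w^2+w, by linear_combination -h'⟩
    omega

private def threeEquiv8 (α : Type*) : Fin 3 × α ≃ (α ⊕ α ⊕ α) where
  toFun := fun x => match x with
    | (0, a) => .inl a
    | (1, a) => .inr (.inl a)
    | (2, a) => .inr (.inr a)
  invFun := fun x => match x with
    | .inl a => (0, a)
    | .inr (.inl a) => (1, a)
    | .inr (.inr a) => (2, a)
  left_inv := by rintro ⟨i, a⟩; fin_cases i <;> rfl
  right_inv := by rintro (a | a | a) <;> rfl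

theorem stmt8 (n : ℕ) :
    3 * Nat.card {p : ℤ × ℤ × ℤ // p.1^2 + p.2.1^2 + 2*p.2.2^2 = (2*n+1 : ℤ)} = Nat.card {p : ℤ × ℤ × ℤ // p.1^2 + p.2.1^2 + p.2.2^2 = (4*n+2 : ℤ)} := by
  have e1 := Equiv.ofBijective (g8 n) ⟨g8_inj n, g8_surj n⟩
  have e := (threeEquiv8 _).trans e1
  rw [← Nat.card_congr e, Nat.card_prod]
  simp
end

section
/- For every nonnegative integer n, the number of integer solutions (x,y,z) to x² + 2y² + 2z² = 4n equals the number of integer solutions to x² + y² + z² = n, and the number of integer solutions to x² + 2y² + 2z² = 4n+3 equals the number of integer solutions to x² + y² + z² = 4n+3. -/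
lemma par1 {x y z m : ℤ} (h : x^2 + 2*y^2 + 2*z^2 = 4*m) : Even x ∧ Even (y+z) := by
  rcases Int.even_or_odd x with ⟨a,rfl⟩|⟨a,rfl⟩ <;>
  rcases Int.even_or_odd y with ⟨b,rfl⟩|⟨b,rfl⟩ <;>
  rcases Int.even_or_odd z with ⟨c,rfl⟩|⟨c,rfl⟩ <;>
  [ exact ⟨⟨a, by ring⟩, ⟨b+c, by ring⟩⟩;
    skip; skip;
    exact ⟨⟨a, by ring⟩, ⟨b+c+1, by ring⟩⟩;
    skip; skip; skip; skip] <;>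
  · exfalso
    first
    | (have h2 : 4*(a^2) + 2*(4*(b^2)+4*b+1) + 8*(c^2) = 4*m := by linear_combination h
       generalize a^2 = A at h2; generalize b^2 = B at h2; generalize c^2 = C at h2; omega)
    | (have h2 : 4*(a^2) + 8*(b^2) + 2*(4*(c^2)+4*c+1) = 4*m := by linear_combination h
       generalize a^2 = A at h2; generalize b^2 = B at h2; generalize c^2 = C at h2; omega)
    | (have h2 : (4*(a^2)+4*a+1) + 8*(b^2) + 8*(c^2) = 4*m := by linear_combination h
       generalize a^2 = A at h2; generalize b^2 = B at h2; generalize c^2 = C at h2; omega)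
    | (have h2 : (4*(a^2)+4*a+1) + 2*(4*(b^2)+4*b+1) + 8*(c^2) = 4*m := by linear_combination h
       generalize a^2 = A at h2; generalize b^2 = B at h2; generalize c^2 = C at h2; omega)
    | (have h2 : (4*(a^2)+4*a+1) + 8*(b^2) + 2*(4*(c^2)+4*c+1) = 4*m := by linear_combination h
       generalize a^2 = A at h2; generalize b^2 = B at h2; generalize c^2 = C at h2; omega)
    | (have h2 : (4*(a^2)+4*a+1) + 2*(4*(b^2)+4*b+1) + 2*(4*(c^2)+4*c+1) = 4*m := by linear_combination h
       generalize a^2 = A at h2; generalize b^2 = B at h2; generalize c^2 = C at h2; omega)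

lemma par2 {x y z m : ℤ} (h : x^2 + y^2 + z^2 = 4*m+3) : Even (y+z) := by
  rcases Int.even_or_odd x with ⟨a,rfl⟩|⟨a,rfl⟩ <;>
  rcases Int.even_or_odd y with ⟨b,rfl⟩|⟨b,rfl⟩ <;>
  rcases Int.even_or_odd z with ⟨c,rfl⟩|⟨c,rfl⟩ <;>
  [ exact ⟨b+c, by ring⟩; skip; skip; exact ⟨b+c+1, by ring⟩;
    exact ⟨b+c, by ring⟩; skip; skip; exact ⟨b+c+1, by ring⟩] <;>
  · exfalso
    first
    | (have h2 : 4*(a^2) + 4*(b^2) + (4*(c^2)+4*c+1) = 4*m+3 := by linear_combination h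
       generalize a^2 = A at h2; generalize b^2 = B at h2; generalize c^2 = C at h2; omega)
    | (have h2 : 4*(a^2) + (4*(b^2)+4*b+1) + 4*(c^2) = 4*m+3 := by linear_combination h
       generalize a^2 = A at h2; generalize b^2 = B at h2; generalize c^2 = C at h2; omega)
    | (have h2 : (4*(a^2)+4*a+1) + 4*(b^2) + (4*(c^2)+4*c+1) = 4*m+3 := by linear_combination h
       generalize a^2 = A at h2; generalize b^2 = B at h2; generalize c^2 = C at h2; omega)
    | (have h2 : (4*(a^2)+4*a+1) + (4*(b^2)+4*b+1) + 4*(c^2) = 4*m+3 := by linear_combination h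
       generalize a^2 = A at h2; generalize b^2 = B at h2; generalize c^2 = C at h2; omega)

theorem stmt9 (n : ℕ) :
    Nat.card {p : ℤ × ℤ × ℤ // p.1^2 + 2*p.2.1^2 + 2*p.2.2^2 = (4*n : ℤ)} = Nat.card {p : ℤ × ℤ × ℤ // p.1^2 + p.2.1^2 + p.2.2^2 = (n : ℤ)} ∧
    Nat.card {p : ℤ × ℤ × ℤ // p.1^2 + 2*p.2.1^2 + 2*p.2.2^2 = (4*n+3 : ℤ)} = Nat.card {p : ℤ × ℤ × ℤ // p.1^2 + p.2.1^2 + p.2.2^2 = (4*n+3 : ℤ)} := by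
  constructor
  · symm
    apply Nat.card_congr
    apply Equiv.ofBijective
      (f := fun p => ⟨(2*p.1.1, p.1.2.1 + p.1.2.2, p.1.2.1 - p.1.2.2), by
        obtain ⟨⟨a,b,c⟩,h⟩ := p; dsimp at h ⊢; linear_combination 4*h⟩)
    constructor
    · rintro ⟨⟨a,b,c⟩,h⟩ ⟨⟨a',b',c'⟩,h'⟩ e
      simp only [Subtype.mk.injEq, Prod.mk.injEq] at e ⊢
      obtain ⟨e1,e2,e3⟩ := e
      exact ⟨by linarith, by linarith, by linarith⟩
    · rintro ⟨⟨x,y,z⟩,h⟩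
      dsimp at h
      obtain ⟨⟨a, rfl⟩, ⟨b, hb⟩⟩ := par1 h
      have hz : z = 2*b - y := by omega
      refine ⟨⟨(a, b, y - b), ?_⟩, ?_⟩
      · dsimp
        have h4 : 4*(a^2 + b^2 + (y-b)^2) = 4*(n:ℤ) := by
          rw [hz] at h; linear_combination h
        linarith
      · simp only [Subtype.mk.injEq, Prod.mk.injEq]
        omega
  · apply Nat.card_congr
    apply Equiv.ofBijective
      (f := fun p => ⟨(p.1.1, p.1.2.1 + p.1.2.2, p.1.2.1 - p.1.2.2), by
        obtain ⟨⟨a,b,c⟩,h⟩ := p; dsimp at h ⊢; linear_combination h⟩)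
    constructor
    · rintro ⟨⟨a,b,c⟩,h⟩ ⟨⟨a',b',c'⟩,h'⟩ e
      simp only [Subtype.mk.injEq, Prod.mk.injEq] at e ⊢
      obtain ⟨e1,e2,e3⟩ := e
      exact ⟨e1, by linarith, by linarith⟩
    · rintro ⟨⟨x,y,z⟩,h⟩
      dsimp at h
      obtain ⟨b, hb⟩ := par2 h
      have hz : z = 2*b - y := by omega
      refine ⟨⟨(x, b, y - b), ?_⟩, ?_⟩
      · dsimp
        rw [hz] at h; linear_combination h
      · simp only [Subtype.mk.injEq, Prod.mk.injEq]
        exact ⟨trivial, by ring, by omega⟩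
end

section
/- For every nonnegative integer n, three times the number of integer solutions (x,y,z) to x² + 2y² + 2z² = 4n+1 equals the number of integer solutions to x² + y² + z² = 4n+1, and three times the number of integer solutions to x² + 2y² + 2z² = 4n+2 equals the number of integer solutions to x² + y² + z² = 4n+2. -/
private def tripPut (i : ℕ) (x b c : ℤ) : ℤ × ℤ × ℤ :=
  match i with
  | 0 => (x, b, c)
  | 1 => (b, x, c)
  | _ => (b, c, x)

private lemma sq4 (x : ℤ) : (x^2 % 4 = 0 ∧ x % 2 = 0) ∨ (x^2 % 4 = 1 ∧ x % 2 = 1) := by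
  rcases Int.even_or_odd x with ⟨a, rfl⟩ | ⟨a, rfl⟩
  · have h1 : (a+a)^2 = 4*(a*a) := by ring
    rw [h1]
    generalize a*a = k
    omega
  · have h1 : (2*a+1)^2 = 4*(a*a+a)+1 := by ring
    rw [h1]
    generalize a*a+a = k
    omega

private lemma Qpar (m x y z : ℤ) (hm : m % 4 = 1 ∨ m % 4 = 2)
    (h : x^2 + 2*y^2 + 2*z^2 = m) :
    x % 2 = m % 2 ∧ (y+z) % 2 = (m+1) % 2 ∧ (y-z) % 2 = (m+1) % 2 := by
  have hx := sq4 x; have hy := sq4 y; have hz := sq4 z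
  obtain ⟨X, hX⟩ : ∃ X, x^2 = X := ⟨_, rfl⟩
  obtain ⟨Y, hY⟩ : ∃ Y, y^2 = Y := ⟨_, rfl⟩
  obtain ⟨Z, hZ⟩ : ∃ Z, z^2 = Z := ⟨_, rfl⟩
  rw [hX] at h hx; rw [hY] at h hy; rw [hZ] at h hz
  omega

private lemma Ppar (m a b c : ℤ) (hm : m % 4 = 1 ∨ m % 4 = 2)
    (h : a^2 + b^2 + c^2 = m) :
    (a%2 = m%2 ∧ b%2 = (m+1)%2 ∧ c%2 = (m+1)%2) ∨
    (b%2 = m%2 ∧ a%2 = (m+1)%2 ∧ c%2 = (m+1)%2) ∨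
    (c%2 = m%2 ∧ a%2 = (m+1)%2 ∧ b%2 = (m+1)%2) := by
  have ha := sq4 a; have hb := sq4 b; have hc := sq4 c
  obtain ⟨A, hA⟩ : ∃ A, a^2 = A := ⟨_, rfl⟩
  obtain ⟨B, hB⟩ : ∃ B, b^2 = B := ⟨_, rfl⟩
  obtain ⟨C, hC⟩ : ∃ C, c^2 = C := ⟨_, rfl⟩
  rw [hA] at h ha; rw [hB] at h hb; rw [hC] at h hc
  omega

private lemma pair_half (b c : ℤ) (h : (b+c) % 2 = 0) : ∃ y z : ℤ, b = y + z ∧ c = y - z :=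
  ⟨(b+c)/2, (b-c)/2, by omega, by omega⟩

private lemma tripPut_sum (i : ℕ) (x b c : ℤ) :
    (tripPut i x b c).1^2 + (tripPut i x b c).2.1^2 + (tripPut i x b c).2.2^2
      = x^2 + b^2 + c^2 := by
  match i with
  | 0 => simp [tripPut]
  | 1 => simp [tripPut]; ring
  | (k+2) => simp [tripPut]; ring

private def Fmap (m : ℤ)
    (q : Fin 3 × {p : ℤ × ℤ × ℤ // p.1^2 + 2*p.2.1^2 + 2*p.2.2^2 = m}) :
    {p : ℤ × ℤ × ℤ // p.1^2 + p.2.1^2 + p.2.2^2 = m} :=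
  ⟨tripPut q.1.val q.2.val.1 (q.2.val.2.1 + q.2.val.2.2) (q.2.val.2.1 - q.2.val.2.2), by
    rw [tripPut_sum]
    have h := q.2.property
    linear_combination h⟩

private lemma key (m : ℤ) (hm : m % 4 = 1 ∨ m % 4 = 2) :
    3 * Nat.card {p : ℤ × ℤ × ℤ // p.1^2 + 2*p.2.1^2 + 2*p.2.2^2 = m}
      = Nat.card {p : ℤ × ℤ × ℤ // p.1^2 + p.2.1^2 + p.2.2^2 = m} := by
  have hbij : Function.Bijective (Fmap m) := by
    constructor
    · rintro ⟨i, ⟨⟨x, y, z⟩, hp⟩⟩ ⟨j, ⟨⟨a, b, c⟩, hq⟩⟩ heq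
      have h1 := Qpar m x y z hm hp
      have h2 := Qpar m a b c hm hq
      have heq' : tripPut i.val x (y+z) (y-z) = tripPut j.val a (b+c) (b-c) :=
        congrArg Subtype.val heq
      fin_cases i <;> fin_cases j <;>
        simp only [tripPut, Fin.val_zero, Fin.val_one, Fin.val_two, Fin.isValue,
          Prod.mk.injEq] at heq' <;>
        simp only [Prod.mk.injEq, Subtype.mk.injEq, Fin.mk.injEq] <;>
        first
          | exact ⟨trivial, by omega, by omega, by omega⟩
          | (exfalso; omega)
    · rintro ⟨⟨a, b, c⟩, hp⟩
      rcases Ppar m a b c hm hp with ⟨h1, h2, h3⟩ | ⟨h1, h2, h3⟩ | ⟨h1, h2, h3⟩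
      · obtain ⟨y, z, rfl, rfl⟩ := pair_half b c (by omega)
        exact ⟨⟨0, ⟨(a, y, z), by linear_combination hp⟩⟩, Subtype.ext (by simp [Fmap, tripPut])⟩
      · obtain ⟨y, z, rfl, rfl⟩ := pair_half a c (by omega)
        exact ⟨⟨1, ⟨(b, y, z), by linear_combination hp⟩⟩, Subtype.ext (by simp [Fmap, tripPut])⟩
      · obtain ⟨y, z, rfl, rfl⟩ := pair_half a b (by omega)
        exact ⟨⟨2, ⟨(c, y, z), by linear_combination hp⟩⟩, Subtype.ext (by simp [Fmap, tripPut])⟩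
  have h := Nat.card_eq_of_bijective (Fmap m) hbij
  rw [Nat.card_prod] at h
  simp only [Nat.card_eq_fintype_card, Fintype.card_fin] at h
  omega

theorem stmt10 (n : ℕ) :
    3 * Nat.card {p : ℤ × ℤ × ℤ // p.1^2 + 2*p.2.1^2 + 2*p.2.2^2 = (4*n+1 : ℤ)} = Nat.card {p : ℤ × ℤ × ℤ // p.1^2 + p.2.1^2 + p.2.2^2 = (4*n+1 : ℤ)} ∧
    3 * Nat.card {p : ℤ × ℤ × ℤ // p.1^2 + 2*p.2.1^2 + 2*p.2.2^2 = (4*n+2 : ℤ)} = Nat.card {p : ℤ × ℤ × ℤ // p.1^2 + p.2.1^2 + p.2.2^2 = (4*n+2 : ℤ)} := by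
  exact ⟨key _ (by left; omega), key _ (by right; omega)⟩
end

section
/- For every nonnegative integer n, six times the number of integer solutions (x,y,z) to x² + 2y² + 4z² = 2n+1 equals the number of integer solutions to x² + y² + z² = 4n+2. -/
namespace Stmt11Aux

/-- The form x² + 2y² + 4z² = 2n+1 -/
def PA (n : ℕ) (p : ℤ × ℤ × ℤ) : Prop := p.1^2 + 2*p.2.1^2 + 4*p.2.2^2 = (2*n+1 : ℤ)
/-- The intermediate form u² + v² + 2w² = 2n+1 -/
def PC (n : ℕ) (p : ℤ × ℤ × ℤ) : Prop := p.1^2 + p.2.1^2 + 2*p.2.2^2 = (2*n+1 : ℤ)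
/-- The form a² + b² + c² = 4n+2 -/
def PB (n : ℕ) (p : ℤ × ℤ × ℤ) : Prop := p.1^2 + p.2.1^2 + p.2.2^2 = (4*n+2 : ℤ)

lemma parity3 (n : ℕ) (a b c : ℤ) (h : a^2 + b^2 + c^2 = (4*n+2 : ℤ)) :
    (Even a ∧ Odd b ∧ Odd c) ∨ (Odd a ∧ Even b ∧ Odd c) ∨ (Odd a ∧ Odd b ∧ Even c) := by
  rcases Int.even_or_odd a with ⟨x, rfl⟩ | ⟨x, rfl⟩ <;>
  rcases Int.even_or_odd b with ⟨y, rfl⟩ | ⟨y, rfl⟩ <;>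
  rcases Int.even_or_odd c with ⟨z, rfl⟩ | ⟨z, rfl⟩
  · exfalso
    have h2 : 4*(x^2+y^2+z^2) = 4*(n:ℤ)+2 := by linear_combination h
    obtain ⟨S, hS⟩ : ∃ S : ℤ, 4*S = 4*(n:ℤ)+2 := ⟨_, h2⟩
    omega
  · exfalso
    have h2 : 4*(x^2+y^2+z^2+z) + 1 = 4*(n:ℤ)+2 := by linear_combination h
    obtain ⟨S, hS⟩ : ∃ S : ℤ, 4*S + 1 = 4*(n:ℤ)+2 := ⟨_, h2⟩
    omega
  · exfalso
    have h2 : 4*(x^2+y^2+y+z^2) + 1 = 4*(n:ℤ)+2 := by linear_combination h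
    obtain ⟨S, hS⟩ : ∃ S : ℤ, 4*S + 1 = 4*(n:ℤ)+2 := ⟨_, h2⟩
    omega
  · exact Or.inl ⟨⟨x, rfl⟩, ⟨y, rfl⟩, ⟨z, rfl⟩⟩
  · exfalso
    have h2 : 4*(x^2+x+y^2+z^2) + 1 = 4*(n:ℤ)+2 := by linear_combination h
    obtain ⟨S, hS⟩ : ∃ S : ℤ, 4*S + 1 = 4*(n:ℤ)+2 := ⟨_, h2⟩
    omega
  · exact Or.inr (Or.inl ⟨⟨x, rfl⟩, ⟨y, rfl⟩, ⟨z, rfl⟩⟩)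
  · exact Or.inr (Or.inr ⟨⟨x, rfl⟩, ⟨y, rfl⟩, ⟨z, rfl⟩⟩)
  · exfalso
    have h2 : 4*(x^2+x+y^2+y+z^2+z) + 3 = 4*(n:ℤ)+2 := by linear_combination h
    obtain ⟨S, hS⟩ : ∃ S : ℤ, 4*S + 3 = 4*(n:ℤ)+2 := ⟨_, h2⟩
    omega

lemma parity2 (n : ℕ) (u v w : ℤ) (h : u^2 + v^2 + 2*w^2 = (2*n+1 : ℤ)) :
    (Odd u ∧ Even v) ∨ (Even u ∧ Odd v) := by
  rcases Int.even_or_odd u with ⟨x, rfl⟩ | ⟨x, rfl⟩ <;>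
  rcases Int.even_or_odd v with ⟨y, rfl⟩ | ⟨y, rfl⟩
  · exfalso
    have h2 : 2*(2*x^2+2*y^2+w^2) = 2*(n:ℤ)+1 := by linear_combination h
    obtain ⟨S, hS⟩ : ∃ S : ℤ, 2*S = 2*(n:ℤ)+1 := ⟨_, h2⟩
    omega
  · exact Or.inr ⟨⟨x, rfl⟩, ⟨y, rfl⟩⟩
  · exact Or.inl ⟨⟨x, rfl⟩, ⟨y, rfl⟩⟩
  · exfalso
    have h2 : 2*(2*x^2+2*x+2*y^2+2*y+1+w^2) = 2*(n:ℤ)+1 := by linear_combination h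
    obtain ⟨S, hS⟩ : ∃ S : ℤ, 2*S = 2*(n:ℤ)+1 := ⟨_, h2⟩
    omega

lemma oddA (n : ℕ) (x y z : ℤ) (h : x^2 + 2*y^2 + 4*z^2 = (2*n+1 : ℤ)) : Odd x := by
  rcases Int.even_or_odd x with ⟨a, rfl⟩ | hx
  · exfalso
    have h2 : 2*(2*a^2+y^2+2*z^2) = 2*(n:ℤ)+1 := by linear_combination h
    obtain ⟨S, hS⟩ : ∃ S : ℤ, 2*S = 2*(n:ℤ)+1 := ⟨_, h2⟩
    omega
  · exact hx

lemma bound_of_sq_le (m x : ℤ) (h : x^2 ≤ m) : -m ≤ x ∧ x ≤ m := by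
  have h1 : 4*x ≤ 4*m + 1 := by nlinarith [sq_nonneg (2*x-1)]
  have h2 : -(4*m+1) ≤ 4*x := by nlinarith [sq_nonneg (2*x+1)]
  omega

lemma finite_of_bound (S : Set (ℤ × ℤ × ℤ)) (m : ℤ)
    (h : ∀ p ∈ S, p.1^2 ≤ m ∧ p.2.1^2 ≤ m ∧ p.2.2^2 ≤ m) : Finite S := by
  have hsub : S ⊆ Set.Icc (-m, -m, -m) (m, m, m) := by
    rintro ⟨a, b, c⟩ hp
    obtain ⟨h1, h2, h3⟩ := h _ hp
    have b1 := bound_of_sq_le m a h1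
    have b2 := bound_of_sq_le m b h2
    have b3 := bound_of_sq_le m c h3
    simp only [Set.mem_Icc, Prod.le_def]
    exact ⟨⟨b1.1, b2.1, b3.1⟩, ⟨b1.2, b2.2, b3.2⟩⟩
  exact ((Set.finite_Icc _ _).subset hsub).to_subtype

instance finB (n : ℕ) : Finite {p : ℤ × ℤ × ℤ // PB n p} := by
  apply finite_of_bound _ (4*(n:ℤ)+2)
  rintro ⟨a, b, c⟩ hp
  have hp : a^2 + b^2 + c^2 = 4*(n:ℤ)+2 := hp
  refine ⟨by nlinarith [sq_nonneg b, sq_nonneg c], by nlinarith [sq_nonneg a, sq_nonneg c],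
    by nlinarith [sq_nonneg a, sq_nonneg b]⟩

instance finC (n : ℕ) : Finite {p : ℤ × ℤ × ℤ // PC n p} := by
  apply finite_of_bound _ (2*(n:ℤ)+1)
  rintro ⟨a, b, c⟩ hp
  have hp : a^2 + b^2 + 2*c^2 = 2*(n:ℤ)+1 := hp
  refine ⟨by nlinarith [sq_nonneg b, sq_nonneg c], by nlinarith [sq_nonneg a, sq_nonneg c],
    by nlinarith [sq_nonneg a, sq_nonneg b]⟩

lemma finite_and {α : Type*} (P Q : α → Prop) [Finite {x // P x}] : Finite {x : α // P x ∧ Q x} :=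
  Finite.of_injective (fun q => (⟨q.1, q.2.1⟩ : Subtype P)) (by
    rintro ⟨a, ha⟩ ⟨b, hb⟩ h
    simp only [Subtype.mk.injEq] at h
    exact Subtype.ext h)

lemma card_split {α : Type*} (P Q : α → Prop) [Finite {x // P x}] :
    Nat.card {x // P x} = Nat.card {x : α // P x ∧ Q x} + Nat.card {x : α // P x ∧ ¬ Q x} := by
  classical
  haveI := finite_and P Q
  haveI := finite_and P (fun x => ¬ Q x)
  have e : {x : α // P x ∧ Q x} ⊕ {x : α // P x ∧ ¬ Q x} ≃ {x // P x} :=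
    (Equiv.sumCongr (Equiv.subtypeSubtypeEquivSubtypeInter P Q).symm
      (Equiv.subtypeSubtypeEquivSubtypeInter P (fun x => ¬ Q x)).symm).trans
      (Equiv.sumCompl fun x : Subtype P => Q x.1)
  rw [← Nat.card_congr e, Nat.card_sum]

/-- C ≃ { b ∈ B : first coordinate even } -/
lemma cardE1 (n : ℕ) :
    Nat.card {p : ℤ × ℤ × ℤ // PC n p} = Nat.card {p : ℤ × ℤ × ℤ // PB n p ∧ Even p.1} := by
  apply Nat.card_congr
  refine Equiv.ofBijective (fun q => ⟨(2*q.1.2.2, q.1.1 + q.1.2.1, q.1.1 - q.1.2.1), ?_, ⟨q.1.2.2, by ring⟩⟩) ⟨?_, ?_⟩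
  · obtain ⟨⟨u, v, w⟩, hq⟩ := q
    simp only [PC] at hq
    simp only [PB]
    linear_combination 2*hq
  · rintro ⟨⟨u, v, w⟩, hq⟩ ⟨⟨u', v', w'⟩, hq'⟩ h
    simp only [Subtype.mk.injEq, Prod.mk.injEq] at h
    apply Subtype.ext
    simp only [Prod.mk.injEq]
    refine ⟨?_, ?_, ?_⟩ <;> omega
  · rintro ⟨⟨a, b, c⟩, hPB, hEa⟩
    simp only [PB] at hPB
    rcases parity3 n a b c hPB with ⟨_, hOb, hOc⟩ | ⟨hOa, _, _⟩ | ⟨hOa, _, _⟩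
    · obtain ⟨m, hm⟩ := hEa
      have ha : a = m + m := hm
      obtain ⟨s, hb⟩ := hOb
      obtain ⟨t, hc⟩ := hOc
      refine ⟨⟨(s+t+1, s-t, m), ?_⟩, ?_⟩
      · have hPB' : (m+m)^2 + (2*s+1)^2 + (2*t+1)^2 = 4*(n:ℤ)+2 := by
          rw [← ha, ← hb, ← hc]; exact hPB
        simp only [PC]
        have h2 : 2*((s+t+1)^2 + (s-t)^2 + 2*m^2) = 2*(2*(n:ℤ)+1) := by linear_combination hPB'
        exact mul_left_cancel₀ (by norm_num : (2:ℤ) ≠ 0) h2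
      · apply Subtype.ext
        simp only [Prod.mk.injEq, and_true, true_and]
        try omega
    · exact absurd hOa (Int.not_odd_iff_even.mpr hEa)
    · exact absurd hOa (Int.not_odd_iff_even.mpr hEa)

/-- C ≃ { b ∈ B : first coordinate odd, second even } -/
lemma cardE2 (n : ℕ) :
    Nat.card {p : ℤ × ℤ × ℤ // PC n p} =
      Nat.card {p : ℤ × ℤ × ℤ // PB n p ∧ ¬ Even p.1 ∧ Even p.2.1} := by
  apply Nat.card_congr
  refine Equiv.ofBijective (fun q => ⟨(q.1.1 + q.1.2.1, 2*q.1.2.2, q.1.1 - q.1.2.1), ?_, ?_, ⟨q.1.2.2, by ring⟩⟩) ⟨?_, ?_⟩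
  · obtain ⟨⟨u, v, w⟩, hq⟩ := q
    simp only [PC] at hq
    simp only [PB]
    linear_combination 2*hq
  · obtain ⟨⟨u, v, w⟩, hq⟩ := q
    simp only [PC] at hq
    rw [← Int.not_odd_iff_even, not_not]
    rcases parity2 n u v w hq with ⟨hu, hv⟩ | ⟨hu, hv⟩
    · exact hu.add_even hv
    · exact hu.add_odd hv
  · rintro ⟨⟨u, v, w⟩, hq⟩ ⟨⟨u', v', w'⟩, hq'⟩ h
    simp only [Subtype.mk.injEq, Prod.mk.injEq] at h
    apply Subtype.ext
    simp only [Prod.mk.injEq]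
    refine ⟨?_, ?_, ?_⟩ <;> omega
  · rintro ⟨⟨a, b, c⟩, hPB, hOa, hEb⟩
    simp only [PB] at hPB
    rcases parity3 n a b c hPB with ⟨hEa, _, _⟩ | ⟨_, _, hOc⟩ | ⟨_, hOb, _⟩
    · exact absurd hEa hOa
    · rw [← Int.not_odd_iff_even, not_not] at hOa
      obtain ⟨s, hs⟩ := hOa
      have ha : a = 2*s + 1 := hs
      obtain ⟨t, hc⟩ := hOc
      obtain ⟨m, hm⟩ := hEb
      have hb : b = m + m := hm
      refine ⟨⟨(s+t+1, s-t, m), ?_⟩, ?_⟩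
      · have hPB' : (2*s+1)^2 + (m+m)^2 + (2*t+1)^2 = 4*(n:ℤ)+2 := by
          rw [← ha, ← hb, ← hc]; exact hPB
        simp only [PC]
        have h2 : 2*((s+t+1)^2 + (s-t)^2 + 2*m^2) = 2*(2*(n:ℤ)+1) := by linear_combination hPB'
        exact mul_left_cancel₀ (by norm_num : (2:ℤ) ≠ 0) h2
      · apply Subtype.ext
        simp only [Prod.mk.injEq, and_true, true_and]
        try omega
    · exact absurd hOb (Int.not_odd_iff_even.mpr hEb)

/-- C ≃ { b ∈ B : first and second coordinates odd } -/
lemma cardE3 (n : ℕ) :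
    Nat.card {p : ℤ × ℤ × ℤ // PC n p} =
      Nat.card {p : ℤ × ℤ × ℤ // PB n p ∧ ¬ Even p.1 ∧ ¬ Even p.2.1} := by
  apply Nat.card_congr
  refine Equiv.ofBijective (fun q => ⟨(q.1.1 + q.1.2.1, q.1.1 - q.1.2.1, 2*q.1.2.2), ?_, ?_, ?_⟩) ⟨?_, ?_⟩
  · obtain ⟨⟨u, v, w⟩, hq⟩ := q
    simp only [PC] at hq
    simp only [PB]
    linear_combination 2*hq
  · obtain ⟨⟨u, v, w⟩, hq⟩ := q
    simp only [PC] at hq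
    rw [← Int.not_odd_iff_even, not_not]
    rcases parity2 n u v w hq with ⟨hu, hv⟩ | ⟨hu, hv⟩
    · exact hu.add_even hv
    · exact hu.add_odd hv
  · obtain ⟨⟨u, v, w⟩, hq⟩ := q
    simp only [PC] at hq
    rw [← Int.not_odd_iff_even, not_not]
    rcases parity2 n u v w hq with ⟨hu, hv⟩ | ⟨hu, hv⟩
    · exact hu.sub_even hv
    · exact hu.sub_odd hv
  · rintro ⟨⟨u, v, w⟩, hq⟩ ⟨⟨u', v', w'⟩, hq'⟩ h
    simp only [Subtype.mk.injEq, Prod.mk.injEq] at h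
    apply Subtype.ext
    simp only [Prod.mk.injEq]
    refine ⟨?_, ?_, ?_⟩ <;> omega
  · rintro ⟨⟨a, b, c⟩, hPB, hOa, hOb⟩
    simp only [PB] at hPB
    rcases parity3 n a b c hPB with ⟨hEa, _, _⟩ | ⟨_, hEb, _⟩ | ⟨_, _, hEc⟩
    · exact absurd hEa hOa
    · exact absurd hEb hOb
    · rw [← Int.not_odd_iff_even, not_not] at hOa hOb
      obtain ⟨s, rfl⟩ := hOa
      obtain ⟨t, rfl⟩ := hOb
      obtain ⟨m, rfl⟩ := hEc
      refine ⟨⟨(s+t+1, s-t, m), ?_⟩, ?_⟩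
      · simp only [PC]
        have h2 : 2*((s+t+1)^2 + (s-t)^2 + 2*m^2) = 2*(2*(n:ℤ)+1) := by linear_combination hPB
        exact mul_left_cancel₀ (by norm_num : (2:ℤ) ≠ 0) h2
      · apply Subtype.ext
        simp only [Prod.mk.injEq, and_true, true_and]
        try omega

/-- A ≃ { c ∈ C : second coordinate even } -/
lemma cardF1 (n : ℕ) :
    Nat.card {p : ℤ × ℤ × ℤ // PA n p} = Nat.card {p : ℤ × ℤ × ℤ // PC n p ∧ Even p.2.1} := by
  apply Nat.card_congr
  refine Equiv.ofBijective (fun q => ⟨(q.1.1, 2*q.1.2.2, q.1.2.1), ?_, ⟨q.1.2.2, by ring⟩⟩) ⟨?_, ?_⟩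
  · obtain ⟨⟨x, y, z⟩, hq⟩ := q
    simp only [PA] at hq
    simp only [PC]
    linear_combination hq
  · rintro ⟨⟨x, y, z⟩, hq⟩ ⟨⟨x', y', z'⟩, hq'⟩ h
    simp only [Subtype.mk.injEq, Prod.mk.injEq] at h
    apply Subtype.ext
    simp only [Prod.mk.injEq]
    refine ⟨?_, ?_, ?_⟩ <;> omega
  · rintro ⟨⟨u, v, w⟩, hPC, hEv⟩
    simp only [PC] at hPC
    obtain ⟨m, hm⟩ := hEv
    have hv : v = m + m := hm
    refine ⟨⟨(u, w, m), ?_⟩, ?_⟩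
    · have hPC' : u^2 + (m+m)^2 + 2*w^2 = 2*(n:ℤ)+1 := by
        rw [← hv]; exact hPC
      simp only [PA]
      linear_combination hPC'
    · apply Subtype.ext
      simp only [Prod.mk.injEq, and_true, true_and]
      try omega

/-- A ≃ { c ∈ C : second coordinate odd } -/
lemma cardF2 (n : ℕ) :
    Nat.card {p : ℤ × ℤ × ℤ // PA n p} = Nat.card {p : ℤ × ℤ × ℤ // PC n p ∧ ¬ Even p.2.1} := by
  apply Nat.card_congr
  refine Equiv.ofBijective (fun q => ⟨(2*q.1.2.2, q.1.1, q.1.2.1), ?_, ?_⟩) ⟨?_, ?_⟩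
  · obtain ⟨⟨x, y, z⟩, hq⟩ := q
    simp only [PA] at hq
    simp only [PC]
    linear_combination hq
  · obtain ⟨⟨x, y, z⟩, hq⟩ := q
    simp only [PA] at hq
    rw [← Int.not_odd_iff_even, not_not]
    exact oddA n x y z hq
  · rintro ⟨⟨x, y, z⟩, hq⟩ ⟨⟨x', y', z'⟩, hq'⟩ h
    simp only [Subtype.mk.injEq, Prod.mk.injEq] at h
    apply Subtype.ext
    simp only [Prod.mk.injEq]
    refine ⟨?_, ?_, ?_⟩ <;> omega
  · rintro ⟨⟨u, v, w⟩, hPC, hOv⟩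
    simp only [PC] at hPC
    rcases parity2 n u v w hPC with ⟨_, hEv⟩ | ⟨hEu, _⟩
    · exact absurd hEv hOv
    · obtain ⟨m, hm⟩ := hEu
      have hu : u = m + m := hm
      refine ⟨⟨(v, w, m), ?_⟩, ?_⟩
      · have hPC' : (m+m)^2 + v^2 + 2*w^2 = 2*(n:ℤ)+1 := by
          rw [← hu]; exact hPC
        simp only [PA]
        linear_combination hPC'
      · apply Subtype.ext
        simp only [Prod.mk.injEq, and_true, true_and]
        try omega

lemma cardC (n : ℕ) :
    Nat.card {p : ℤ × ℤ × ℤ // PC n p} = 2 * Nat.card {p : ℤ × ℤ × ℤ // PA n p} := by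
  rw [card_split (PC n) (fun p => Even p.2.1), ← cardF1, ← cardF2]
  ring

lemma cardB (n : ℕ) :
    Nat.card {p : ℤ × ℤ × ℤ // PB n p} = 3 * Nat.card {p : ℤ × ℤ × ℤ // PC n p} := by
  haveI := finite_and (PB n) (fun p : ℤ × ℤ × ℤ => ¬ Even p.1)
  rw [card_split (PB n) (fun p => Even p.1),
    card_split (fun p : ℤ × ℤ × ℤ => PB n p ∧ ¬ Even p.1) (fun p => Even p.2.1)]
  have e1 : Nat.card {p : ℤ × ℤ × ℤ // (PB n p ∧ ¬ Even p.1) ∧ Even p.2.1} =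
      Nat.card {p : ℤ × ℤ × ℤ // PB n p ∧ ¬ Even p.1 ∧ Even p.2.1} :=
    Nat.card_congr (Equiv.subtypeEquivRight (fun p => by tauto))
  have e2 : Nat.card {p : ℤ × ℤ × ℤ // (PB n p ∧ ¬ Even p.1) ∧ ¬ Even p.2.1} =
      Nat.card {p : ℤ × ℤ × ℤ // PB n p ∧ ¬ Even p.1 ∧ ¬ Even p.2.1} :=
    Nat.card_congr (Equiv.subtypeEquivRight (fun p => by tauto))
  rw [e1, e2, ← cardE1, ← cardE2, ← cardE3]
  ring

end Stmt11Aux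

theorem stmt11 (n : ℕ) :
    6 * Nat.card {p : ℤ × ℤ × ℤ // p.1^2 + 2*p.2.1^2 + 4*p.2.2^2 = (2*n+1 : ℤ)} = Nat.card {p : ℤ × ℤ × ℤ // p.1^2 + p.2.1^2 + p.2.2^2 = (4*n+2 : ℤ)} := by
  have hA : Nat.card {p : ℤ × ℤ × ℤ // p.1^2 + 2*p.2.1^2 + 4*p.2.2^2 = (2*n+1 : ℤ)} =
      Nat.card {p : ℤ × ℤ × ℤ // Stmt11Aux.PA n p} := rfl
  have hB : Nat.card {p : ℤ × ℤ × ℤ // p.1^2 + p.2.1^2 + p.2.2^2 = (4*n+2 : ℤ)} =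
      Nat.card {p : ℤ × ℤ × ℤ // Stmt11Aux.PB n p} := rfl
  rw [hA, hB, Stmt11Aux.cardB, Stmt11Aux.cardC]
  ring
end

section
/- For every nonnegative integer n, the number of integer solutions (x,y,z) to x² + 3y² + 3z² + 2yz = 8n equals the number of integer solutions to x² + y² + z² = n. -/
lemma zmod_key : ∀ a b c : ZMod 8, a^2+3*b^2+3*c^2+2*b*c = 0 →
    (ZMod.castHom (by norm_num : (4:ℕ) ∣ 8) (ZMod 4)) (a+b-c) = 0 ∧
    (ZMod.castHom (by norm_num : (2:ℕ) ∣ 8) (ZMod 2)) (b+c) = 0 := by decide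

theorem stmt12 (n : ℕ) :
    Nat.card {p : ℤ × ℤ × ℤ // p.1^2 + 3*p.2.1^2 + 3*p.2.2^2 + 2*p.2.1*p.2.2 = (8*n : ℤ)} = Nat.card {p : ℤ × ℤ × ℤ // p.1^2 + p.2.1^2 + p.2.2^2 = (n : ℤ)} := by
  refine Nat.card_congr (Equiv.symm (Equiv.ofBijective
    (fun p => ⟨(2*(p.1.1+p.1.2.1), p.1.1 - p.1.2.1 + p.1.2.2, -p.1.1 + p.1.2.1 + p.1.2.2), by
      obtain ⟨⟨a, b, c⟩, hp⟩ := p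
      simp only at hp ⊢
      linear_combination 8 * hp⟩) ⟨?_, ?_⟩))
  · rintro ⟨⟨a, b, c⟩, hp⟩ ⟨⟨a', b', c'⟩, hp'⟩ h
    simp only [Subtype.mk.injEq, Prod.mk.injEq] at h ⊢
    omega
  · rintro ⟨⟨x, y, z⟩, hp⟩
    simp only at hp
    have h8 : ((x : ZMod 8))^2 + 3*(y : ZMod 8)^2 + 3*(z : ZMod 8)^2
        + 2*(y : ZMod 8)*(z : ZMod 8) = 0 := by
      have := congrArg (Int.cast : ℤ → ZMod 8) hp
      push_cast at this
      rw [this, show ((8:ZMod 8)) = 0 from by decide, zero_mul]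
    obtain ⟨k1, k2⟩ := zmod_key _ _ _ h8
    have d1 : (4:ℤ) ∣ (x + y - z) := by
      have : ((x + y - z : ℤ) : ZMod 4) = 0 := by
        push_cast
        calc ((x:ZMod 4) + y - z)
            = (ZMod.castHom (by norm_num : (4:ℕ) ∣ 8) (ZMod 4))
              ((x : ZMod 8) + y - z) := by simp [map_add, map_sub, map_intCast]
          _ = 0 := k1
      exact (ZMod.intCast_zmod_eq_zero_iff_dvd _ 4).mp this
    have d2 : (2:ℤ) ∣ (y + z) := by
      have : ((y + z : ℤ) : ZMod 2) = 0 := by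
        push_cast
        calc ((y:ZMod 2) + z)
            = (ZMod.castHom (by norm_num : (2:ℕ) ∣ 8) (ZMod 2))
              ((y : ZMod 8) + z) := by simp [map_add, map_intCast]
          _ = 0 := k2
      exact (ZMod.intCast_zmod_eq_zero_iff_dvd _ 2).mp this
    obtain ⟨a, ha⟩ := d1
    obtain ⟨c, hc⟩ := d2
    -- x - y + z = (x+y-z) + 2(z-y); 2 ∣ z - y from d2, so 4 ∣ x - y + z
    have d3 : (4:ℤ) ∣ (x - y + z) := by
      have h2 : (2:ℤ) ∣ (z - y) := by omega
      obtain ⟨m, hm⟩ := h2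
      exact ⟨a + m, by omega⟩
    obtain ⟨b, hb⟩ := d3
    refine ⟨⟨(a, b, c), ?_⟩, ?_⟩
    · simp only
      have hx : x = 2*(a+b) := by omega
      have hy : y = a - b + c := by omega
      have hz : z = -a + b + c := by omega
      subst hx hy hz
      have h88 : (8:ℤ)*(a^2+b^2+c^2) = 8*(n:ℤ) := by linear_combination hp
      linarith
    · simp only [Subtype.mk.injEq, Prod.mk.injEq]
      refine ⟨by omega, by omega, by omega⟩
end

section
/- For every nonnegative integer n, the number of integer solutions (x,y,z) to x² + 3y² + 3z² = 3n equals the number of integer solutions to x² + y² + 3z² = n. -/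
theorem stmt15 (n : ℕ) :
    Nat.card {p : ℤ × ℤ × ℤ // p.1^2 + 3*p.2.1^2 + 3*p.2.2^2 = (3*n : ℤ)} = Nat.card {p : ℤ × ℤ × ℤ // p.1^2 + p.2.1^2 + 3*p.2.2^2 = (n : ℤ)} := by
  apply Nat.card_congr
  have key : ∀ x y z : ℤ, x^2 + 3*y^2 + 3*z^2 = (3*n : ℤ) → 3 ∣ x := by
    intro x y z h
    have h3 : (3 : ℤ) ∣ x^2 := ⟨(n : ℤ) - y^2 - z^2, by linarith⟩
    exact Int.Prime.dvd_pow' (by norm_num) h3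
  refine ⟨fun p => ⟨(p.1.2.1, p.1.2.2, p.1.1 / 3), ?_⟩,
          fun q => ⟨(3 * q.1.2.2, q.1.1, q.1.2.1), by have := q.2; simp only; linarith⟩,
          ?_, ?_⟩
  · obtain ⟨⟨x, y, z⟩, h⟩ := p
    obtain ⟨u, rfl⟩ := key x y z h
    simp only at h ⊢
    rw [Int.mul_ediv_cancel_left _ (by norm_num)]
    nlinarith [h]
  · rintro ⟨⟨x, y, z⟩, h⟩
    have hd := key x y z h
    ext <;> simp [Int.mul_ediv_cancel' hd]
  · rintro ⟨⟨a, b, c⟩, h⟩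
    ext <;> simp [Int.mul_ediv_cancel_left]
end

section
/- For every nonnegative integer n, the number of integer solutions (x,y,z) to x² + 3y² + 3z² = n equals the number of integer solutions to x² + 3y² + 3z² = 9n. -/
lemma zmod3_sq (a b : ℤ) (h : (3:ℤ) ∣ a^2 + b^2) : (3:ℤ) ∣ a ∧ (3:ℤ) ∣ b := by
  have h3 : ((a:ZMod 3)^2 + (b:ZMod 3)^2 = 0) := by
    have := (ZMod.intCast_zmod_eq_zero_iff_dvd (a^2+b^2) 3).mpr h
    push_cast at this; exact this
  have key : ∀ A B : ZMod 3, A^2 + B^2 = 0 → A = 0 ∧ B = 0 := by decide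
  obtain ⟨hA, hB⟩ := key _ _ h3
  constructor
  · exact_mod_cast (ZMod.intCast_zmod_eq_zero_iff_dvd a 3).mp hA
  · exact_mod_cast (ZMod.intCast_zmod_eq_zero_iff_dvd b 3).mp hB

theorem stmt16 (n : ℕ) :
    Nat.card {p : ℤ × ℤ × ℤ // p.1^2 + 3*p.2.1^2 + 3*p.2.2^2 = (n : ℤ)} = Nat.card {p : ℤ × ℤ × ℤ // p.1^2 + 3*p.2.1^2 + 3*p.2.2^2 = (9*n : ℤ)} := by
  apply Nat.card_congr
  refine Equiv.ofBijective (fun p => ⟨(3 * p.1.1, 3 * p.1.2.1, 3 * p.1.2.2), by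
    have := p.2; ring_nf; ring_nf at this; linarith⟩) ⟨?_, ?_⟩
  · rintro ⟨⟨x, y, z⟩, h⟩ ⟨⟨x', y', z'⟩, h'⟩ e
    simp only [Subtype.mk.injEq, Prod.mk.injEq] at e ⊢
    omega
  · rintro ⟨⟨x, y, z⟩, h⟩
    dsimp only at h
    have hx : (3:ℤ) ∣ x := by
      have : (3:ℤ) ∣ x^2 := ⟨3*n - y^2 - z^2, by linarith⟩
      exact Int.prime_three.dvd_of_dvd_pow this
    obtain ⟨a, rfl⟩ := hx
    have hyz : (3:ℤ) ∣ y^2 + z^2 := ⟨n - a^2, by nlinarith⟩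
    obtain ⟨hy, hz⟩ := zmod3_sq y z hyz
    obtain ⟨b, rfl⟩ := hy
    obtain ⟨c, rfl⟩ := hz
    exact ⟨⟨(a, b, c), by nlinarith⟩, by simp [mul_comm]⟩
end
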